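/- For positive definite Hermitian matrices Φ₀, Φ₁ and positive definite Hermitian weight Ω, with U_Ω := Φ₁^{-1/2} Ω^{-1} Φ₀^{-1/2} (Φ₀^{1/2} Ω Φ₁ Ω Φ₀^{1/2})^{1/2}, the weighted Hellinger quantity tr(Ω Φ₀) + tr(Ω Φ₁) - 2·tr((Φ₀^{1/2} Ω Φ₁ Ω Φ₀^{1/2})^{1/2}) equals tr((Φ₀^{1/2} - Φ₁^{1/2} U_Ω)* Ω (Φ₀^{1/2} - Φ₁^{1/2} U_Ω)). -/

import Mathlib

open Matrix
open scoped ComplexOrder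

/-- The square root of a positive semidefinite matrix, as defined in the older Mathlib
(`Matrix.PosSemidef.sqrt`, removed since). -/
noncomputable def Matrix.PosSemidef.sqrt {n : Type*} {𝕜 : Type*} [Fintype n] [RCLike 𝕜]
    [DecidableEq n] {A : Matrix n n 𝕜} (hA : A.PosSemidef) : Matrix n n 𝕜 :=
  hA.1.eigenvectorUnitary.1 * diagonal ((↑) ∘ (√·) ∘ hA.1.eigenvalues) *
    (star hA.1.eigenvectorUnitary : Matrix n n 𝕜)

theorem Matrix.PosSemidef.sqrt_mul_self {n : Type*} {𝕜 : Type*} [Fintype n] [RCLike 𝕜]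
    [DecidableEq n] {A : Matrix n n 𝕜} (hA : A.PosSemidef) : hA.sqrt * hA.sqrt = A := by
  conv_rhs => rw [hA.1.spectral_theorem, Unitary.conjStarAlgAut_apply]
  unfold Matrix.PosSemidef.sqrt
  have hU : (star hA.1.eigenvectorUnitary : Matrix n n 𝕜) * hA.1.eigenvectorUnitary.1 = 1 :=
    Unitary.coe_star_mul_self _
  have hD : diagonal ((↑) ∘ (√·) ∘ hA.1.eigenvalues) * diagonal ((↑) ∘ (√·) ∘ hA.1.eigenvalues)
      = diagonal (RCLike.ofReal ∘ hA.1.eigenvalues : n → 𝕜) := by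
    rw [diagonal_mul_diagonal]
    congr 1
    funext i
    simp only [Function.comp_apply]
    rw [← RCLike.ofReal_mul, Real.mul_self_sqrt (hA.eigenvalues_nonneg i)]
  calc _ = hA.1.eigenvectorUnitary.1 * diagonal ((↑) ∘ (√·) ∘ hA.1.eigenvalues) *
        ((star hA.1.eigenvectorUnitary : Matrix n n 𝕜) * hA.1.eigenvectorUnitary.1) *
        diagonal ((↑) ∘ (√·) ∘ hA.1.eigenvalues) * (star hA.1.eigenvectorUnitary : Matrix n n 𝕜) := by
          simp only [Matrix.mul_assoc]
    _ = _ := by rw [hU, Matrix.mul_one, Matrix.mul_assoc _ (diagonal _) (diagonal _), hD]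

theorem Matrix.PosSemidef.posSemidef_sqrt {n : Type*} {𝕜 : Type*} [Fintype n] [RCLike 𝕜]
    [DecidableEq n] {A : Matrix n n 𝕜} (hA : A.PosSemidef) : hA.sqrt.PosSemidef := by
  unfold Matrix.PosSemidef.sqrt
  have h : (diagonal ((↑) ∘ (√·) ∘ hA.1.eigenvalues) : Matrix n n 𝕜).PosSemidef := by
    rw [posSemidef_diagonal_iff]
    intro i
    simp only [Function.comp_apply]
    exact_mod_cast Real.sqrt_nonneg _
  have := h.mul_mul_conjTranspose_same (hA.1.eigenvectorUnitary.1)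
  simpa [Matrix.star_eq_conjTranspose] using this

set_option maxHeartbeats 1000000 in
theorem weighted_hellinger_as_factor_distance (n : ℕ)
    (Φ₀ Φ₁ Ω : Matrix (Fin n) (Fin n) ℂ)
    (h0 : Φ₀.PosDef) (h1 : Φ₁.PosDef) (hΩ : Ω.PosDef)
    (hS : (h0.posSemidef.sqrt * Ω * Φ₁ * Ω * h0.posSemidef.sqrt).PosSemidef) :
    (Ω * Φ₀).trace.re + (Ω * Φ₁).trace.re - 2 * hS.sqrt.trace.re =
      (((h0.posSemidef.sqrt -
          h1.posSemidef.sqrt * (h1.posSemidef.sqrt⁻¹ * Ω⁻¹ * h0.posSemidef.sqrt⁻¹ * hS.sqrt))ᴴ *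
        Ω *
        (h0.posSemidef.sqrt -
          h1.posSemidef.sqrt * (h1.posSemidef.sqrt⁻¹ * Ω⁻¹ * h0.posSemidef.sqrt⁻¹ * hS.sqrt))).trace).re := by
  set A := h0.posSemidef.sqrt with hA
  set B := h1.posSemidef.sqrt with hB
  set S := hS.sqrt with hSdef
  have hAA : A * A = Φ₀ := h0.posSemidef.sqrt_mul_self
  have hBB : B * B = Φ₁ := h1.posSemidef.sqrt_mul_self
  have hSS : S * S = A * Ω * Φ₁ * Ω * A := hS.sqrt_mul_self
  have hAH : Aᴴ = A := h0.posSemidef.posSemidef_sqrt.isHermitian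
  have hSH : Sᴴ = S := hS.posSemidef_sqrt.isHermitian
  have hΩH : Ωᴴ = Ω := hΩ.isHermitian
  have hAu : IsUnit A := by
    rw [Matrix.isUnit_iff_isUnit_det]
    have : IsUnit (A.det * A.det) := by
      rw [← Matrix.det_mul, hAA, ← Matrix.isUnit_iff_isUnit_det]
      exact h0.isUnit
    exact isUnit_of_mul_isUnit_left this
  have hBu : IsUnit B := by
    rw [Matrix.isUnit_iff_isUnit_det]
    have : IsUnit (B.det * B.det) := by
      rw [← Matrix.det_mul, hBB, ← Matrix.isUnit_iff_isUnit_det]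
      exact h1.isUnit
    exact isUnit_of_mul_isUnit_left this
  haveI := hAu.invertible
  haveI := hBu.invertible
  haveI := hΩ.isUnit.invertible
  have hAiH : A⁻¹ᴴ = A⁻¹ := by rw [Matrix.conjTranspose_nonsing_inv, hAH]
  have hΩiH : Ω⁻¹ᴴ = Ω⁻¹ := by rw [Matrix.conjTranspose_nonsing_inv, hΩH]
  -- the factor B * U simplifies
  have hBU : B * (B⁻¹ * Ω⁻¹ * A⁻¹ * S) = Ω⁻¹ * (A⁻¹ * S) := by
    simp only [Matrix.mul_assoc, Matrix.mul_inv_cancel_left_of_invertible]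
  -- expand the quadratic form
  have key : ((A - B * (B⁻¹ * Ω⁻¹ * A⁻¹ * S))ᴴ * Ω * (A - B * (B⁻¹ * Ω⁻¹ * A⁻¹ * S))).trace
      = (Ω * Φ₀).trace + (Ω * Φ₁).trace - S.trace - S.trace := by
    rw [hBU]
    have hCH : (Ω⁻¹ * (A⁻¹ * S))ᴴ = S * A⁻¹ * Ω⁻¹ := by
      simp [Matrix.conjTranspose_mul, hSH, hAiH, hΩiH, Matrix.mul_assoc]
    rw [Matrix.conjTranspose_sub, hCH, hAH]
    rw [Matrix.sub_mul, Matrix.sub_mul, Matrix.mul_sub, Matrix.mul_sub]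
    have e1 : A * Ω * (Ω⁻¹ * (A⁻¹ * S)) = S := by
      simp only [Matrix.mul_assoc, Matrix.mul_inv_cancel_left_of_invertible]
    have e2 : S * A⁻¹ * Ω⁻¹ * Ω * A = S := by
      simp only [Matrix.mul_assoc, Matrix.inv_mul_cancel_left_of_invertible,
        Matrix.nonsing_inv_mul_cancel_right, Matrix.inv_mul_of_invertible, Matrix.mul_one]
    have e3 : S * A⁻¹ * Ω⁻¹ * Ω * (Ω⁻¹ * (A⁻¹ * S)) = S * (A⁻¹ * (Ω⁻¹ * (A⁻¹ * S))) := by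
      simp only [Matrix.mul_assoc, Matrix.inv_mul_cancel_left_of_invertible]
    rw [e1, e2, e3]
    have t1 : (A * Ω * A).trace = (Ω * Φ₀).trace := by
      rw [Matrix.trace_mul_cycle, hAA, Matrix.trace_mul_comm]
    have t4 : (S * (A⁻¹ * (Ω⁻¹ * (A⁻¹ * S)))).trace = (Ω * Φ₁).trace := by
      rw [Matrix.trace_mul_comm]
      have : A⁻¹ * (Ω⁻¹ * (A⁻¹ * S)) * S = A⁻¹ * (Ω⁻¹ * (A⁻¹ * (S * S))) := by
        simp only [Matrix.mul_assoc]
      rw [this, hSS]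
      have : A⁻¹ * (Ω⁻¹ * (A⁻¹ * (A * Ω * Φ₁ * Ω * A))) = A⁻¹ * (Φ₁ * Ω * A) := by
        simp only [Matrix.mul_assoc, Matrix.inv_mul_cancel_left_of_invertible]
      rw [this, Matrix.trace_mul_comm]
      simp only [Matrix.mul_assoc, Matrix.mul_inv_cancel_left_of_invertible,
        Matrix.mul_inv_of_invertible, Matrix.inv_mul_of_invertible, Matrix.mul_one,
        Matrix.one_mul]
      rw [Matrix.trace_mul_comm]
    simp only [Matrix.trace_sub, t1, t4]
    ring
  rw [key]
  simp [Complex.sub_re, Complex.add_re]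
  ring
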